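/- arXiv:1912.07147 — 2 statements merged into one kernel-verified Lean document; each statement's English description precedes it below -/
import Mathlib

section
/- Let n ≥ 6 and let G be a Θ-graph on n vertices, consisting of three internally vertex-disjoint paths Q₁, Q₂, Q₃ joining vertices x and y, where Q₁ and Q₂ each have at least 3 vertices. Suppose G has a rainbow 2-connected edge-colouring using at most n − 2 colours. Then no colour appears on three or more edges of G. -/
open SimpleGraph

/-- A walk is rainbow (w.r.t. an edge-colouring `col`) if its edges receive
pairwise distinct colours. -/
def IsRainbowWalk {V α : Type*} {G : SimpleGraph V} {u v : V} (col : Sym2 V → α)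
    (p : G.Walk u v) : Prop :=
  (p.edges.map col).Nodup

/-- An edge-colouring is rainbow 2-connected if every two distinct vertices are
connected by two internally vertex-disjoint rainbow paths. -/
def RainbowTwoConnectedColouring {V α : Type*} (G : SimpleGraph V) (col : Sym2 V → α) : Prop :=
  ∀ u v : V, u ≠ v → ∃ p q : G.Walk u v, p.IsPath ∧ q.IsPath ∧ p ≠ q ∧
    IsRainbowWalk col p ∧ IsRainbowWalk col q ∧
    ∀ w : V, w ∈ p.support → w ∈ q.support → w = u ∨ w = v

/-- The rainbow 2-connection number: the least number of colours in a rainbow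
2-connected colouring. -/
noncomputable def rc2 {V : Type*} (G : SimpleGraph V) : ℕ :=
  sInf {r : ℕ | ∃ col : Sym2 V → Fin r, RainbowTwoConnectedColouring G col}

/-- A graph is 2-connected if it has at least 3 vertices and deleting any single
vertex leaves a connected graph. -/
def TwoConnected {V : Type*} [Fintype V] (G : SimpleGraph V) : Prop :=
  3 ≤ Fintype.card V ∧ ∀ v : V, (G.induce ({v}ᶜ : Set V)).Connected

/-- `t2 n r`: minimum number of edges of a 2-connected graph on `n` vertices
with rainbow 2-connection number at most `r`. -/
noncomputable def t2 (n r : ℕ) : ℕ :=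
  sInf {m : ℕ | ∃ G : SimpleGraph (Fin n), TwoConnected G ∧ rc2 G ≤ r ∧ G.edgeSet.ncard = m}

/-- `s2 n r`: maximum number of edges of a 2-connected graph on `n` vertices
with rainbow 2-connection number at least `r`. -/
noncomputable def s2 (n r : ℕ) : ℕ :=
  sSup {m : ℕ | ∃ G : SimpleGraph (Fin n), TwoConnected G ∧ r ≤ rc2 G ∧ G.edgeSet.ncard = m}

section AuxRainbow
set_option linter.unusedSectionVars false

variable {V : Type*} {G : SimpleGraph V} [DecidableEq V]

namespace Aux


lemma loop_path_eq_nil {v : V} (p : G.Walk v v) (hp : p.IsPath) : p = Walk.nil := by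
  cases p with
  | nil => rfl
  | cons h t =>
    rw [Walk.cons_isPath_iff] at hp
    exact (hp.2 t.end_mem_support).elim

lemma mem_support_of_mem_edge {u v z : V} (p : G.Walk u v) {e : Sym2 V}
    (he : e ∈ p.edges) (hz : z ∈ e) : z ∈ p.support := by
  induction e with
  | _ a b =>
    rcases Sym2.mem_iff.1 hz with rfl | rfl
    · exact p.fst_mem_support_of_mem_edges he
    · exact p.snd_mem_support_of_mem_edges he

lemma edge_at_start_unique {u v : V} (p : G.Walk u v) (hp : p.IsPath) {e e' : Sym2 V}
    (he : e ∈ p.edges) (he' : e' ∈ p.edges) (hu : u ∈ e) (hu' : u ∈ e') : e = e' := by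
  induction p with
  | nil => simp at he
  | @cons u b v h t ih =>
    rw [Walk.cons_isPath_iff] at hp
    have key : ∀ d : Sym2 V, d ∈ (Walk.cons h t).edges → u ∈ d → d = s(u, b) := by
      intro d hd hud
      rw [Walk.edges_cons, List.mem_cons] at hd
      rcases hd with rfl | hd
      · rfl
      · exact ((hp.2 (mem_support_of_mem_edge t hd hud))).elim
    rw [key e he hu, key e' he' hu']

lemma three_edges_at_vertex {u v w : V} (p : G.Walk u v) (hp : p.IsPath)
    {e₁ e₂ e₃ : Sym2 V} (h1 : e₁ ∈ p.edges) (h2 : e₂ ∈ p.edges) (h3 : e₃ ∈ p.edges)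
    (h12 : e₁ ≠ e₂) (h13 : e₁ ≠ e₃) (h23 : e₂ ≠ e₃)
    (hw1 : w ∈ e₁) (hw2 : w ∈ e₂) (hw3 : w ∈ e₃) : False := by
  induction p with
  | nil => simp at h1
  | @cons u b v h t ih =>
    rw [Walk.cons_isPath_iff] at hp
    rw [Walk.edges_cons, List.mem_cons] at h1 h2 h3
    have two_t : ∀ a c : Sym2 V, a ∈ t.edges → c ∈ t.edges → a ≠ c → w ∈ a → w ∈ c →
        w ∈ s(u, b) → False := by
      intro a c ha hc hac hwa hwc hwh
      rcases Sym2.mem_iff.1 hwh with rfl | rfl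
      · exact hp.2 (mem_support_of_mem_edge t ha hwa)
      · exact hac (edge_at_start_unique t hp.1 ha hc hwa hwc)
    rcases h1 with rfl | h1
    · have h2' : e₂ ∈ t.edges := h2.resolve_left (fun h' => h12 h'.symm)
      have h3' : e₃ ∈ t.edges := h3.resolve_left (fun h' => h13 h'.symm)
      exact two_t e₂ e₃ h2' h3' h23 hw2 hw3 hw1
    · rcases h2 with rfl | h2
      · have h3' : e₃ ∈ t.edges := h3.resolve_left (fun h' => h23 h'.symm)
        exact two_t e₁ e₃ h1 h3' h13 hw1 hw3 hw2
      · rcases h3 with rfl | h3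
        · exact two_t e₁ e₂ h1 h2 h12 hw1 hw2 hw3
        · exact ih hp.1 h1 h2 h3

lemma dart_snd_ne_start {b y : V} (p : G.Walk b y) (hp : p.IsPath) {d : G.Dart}
    (hd : d ∈ p.darts) : d.snd ≠ b := by
  induction p with
  | nil => simp at hd
  | @cons u c v h t ih =>
    rw [Walk.cons_isPath_iff] at hp
    rw [Walk.darts_cons, List.mem_cons] at hd
    rcases hd with rfl | hd
    · exact h.ne'
    · intro hb
      exact hp.2 (hb ▸ t.dart_snd_mem_support_of_mem_darts hd)

lemma isPath_append_of_inter {u v w : V} {p : G.Walk u v} {q : G.Walk v w}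
    (hp : p.IsPath) (hq : q.IsPath)
    (hint : ∀ z, z ∈ p.support → z ∈ q.support → z = v) : (p.append q).IsPath := by
  rw [Walk.isPath_def, Walk.support_append, List.nodup_append]
  refine ⟨hp.support_nodup, hq.support_nodup.tail, ?_⟩
  intro z hzp z' hzq hzz
  subst hzz
  have hzq' : z ∈ q.support := List.mem_of_mem_tail hzq
  have : z = v := hint z hzp hzq'
  subst this
  have := hq.support_nodup
  rw [q.support_eq_cons] at this
  exact (List.nodup_cons.1 this).1 hzq



lemma takeUntil_start {v w : V} (p : G.Walk v w) (h : v ∈ p.support) :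
    p.takeUntil v h = Walk.nil := by
  cases p with
  | nil => rfl
  | cons r q => simp [Walk.takeUntil]

lemma takeUntil_cons {u a w b : V} (r : G.Adj u a) (q : G.Walk a w)
    (h : b ∈ (Walk.cons r q).support) (hb : b ∈ q.support) (hub : u ≠ b) :
    (Walk.cons r q).takeUntil b h = Walk.cons r (q.takeUntil b hb) := by
  simp [Walk.takeUntil, hub]





lemma end_not_mem_takeUntil {u v w : V} (p : G.Walk u v) (hp : p.IsPath)
    (h : w ∈ p.support) (hwv : w ≠ v) : v ∉ (p.takeUntil w h).support := by
  intro hv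
  have hspec := p.take_spec h
  have hnd : p.support.Nodup := hp.support_nodup
  rw [← hspec, Walk.support_append, List.nodup_append] at hnd
  have hvd : v ∈ (p.dropUntil w h).support.tail := by
    have hv' : v ∈ (p.dropUntil w h).support := Walk.end_mem_support _
    rw [Walk.support_eq_cons] at hv'
    rcases hv' with _ | hv'
    · exact (hwv rfl).elim
    · assumption
  exact hnd.2.2 _ hv _ hvd rfl

lemma start_not_mem_dropUntil {u v w : V} (p : G.Walk u v) (hp : p.IsPath)
    (h : w ∈ p.support) (hwu : w ≠ u) : u ∉ (p.dropUntil w h).support := by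
  intro hu
  have hspec := p.take_spec h
  have hnd : p.support.Nodup := hp.support_nodup
  rw [← hspec, Walk.support_append, List.nodup_append] at hnd
  have hud : u ∈ (p.dropUntil w h).support.tail := by
    rw [Walk.support_eq_cons] at hu
    rcases hu with _ | hu
    · exact (hwu rfl).elim
    · assumption
  exact hnd.2.2 _ (Walk.start_mem_support _) _ hud rfl

lemma dart_fst_not_mem_dropUntil {x y : V} (p : G.Walk x y) (hp : p.IsPath) {d : G.Dart}
    (hd : d ∈ p.darts) (h : d.snd ∈ p.support) : d.fst ∉ (p.dropUntil d.snd h).support := by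
  intro hz
  have hspec := p.take_spec h
  have hnd : p.support.Nodup := hp.support_nodup
  rw [← hspec, Walk.support_append, List.nodup_append] at hnd
  have hzt : d.fst ∈ (p.dropUntil d.snd h).support.tail := by
    rcases List.mem_cons.1 ((p.dropUntil d.snd h).support_eq_cons ▸ hz) with h1 | h1
    · exact (d.adj.ne h1).elim
    · exact h1
  have hsplit : (p.takeUntil d.snd h).darts ++ (p.dropUntil d.snd h).darts = p.darts := by
    rw [← Walk.darts_append, hspec]
  rw [← hsplit, List.mem_append] at hd
  rcases hd with hd | hd
  · exact hnd.2.2 _ (Walk.dart_fst_mem_support_of_mem_darts _ hd) _ hzt rfl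
  · exact dart_snd_ne_start _ (hp.dropUntil h) hd rfl



lemma exists_takeUntil_single {u y : V} (p : G.Walk u y) (hp : p.IsPath) {e : Sym2 V}
    (he : e ∈ p.edges) :
    ∃ (b : V) (hb : b ∈ p.support), b ≠ u ∧ e ∈ (p.takeUntil b hb).edges ∧ (b = y → y ∈ e) := by
  induction p with
  | nil => simp at he
  | @cons u c y h t ih =>
    have hp' := (Walk.cons_isPath_iff _ _).1 hp
    rw [Walk.edges_cons, List.mem_cons] at he
    rcases he with rfl | he
    · refine ⟨c, by simp, h.ne', ?_, ?_⟩
      · erw [takeUntil_cons h t _ t.start_mem_support h.ne, takeUntil_start]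
        simp
      · rintro rfl; simp
    · obtain ⟨b, hb, hbc, hmem, hy⟩ := ih hp'.1 he
      have hub : u ≠ b := fun h' => hp'.2 (h' ▸ hb)
      refine ⟨b, by simp [hb], fun h' => hub h'.symm, ?_, hy⟩
      erw [takeUntil_cons h t _ hb hub, Walk.edges_cons]
      exact List.mem_cons_of_mem _ hmem

lemma exists_takeUntil_pair {u y : V} (p : G.Walk u y) (hp : p.IsPath) {e f : Sym2 V}
    (he : e ∈ p.edges) (hf : f ∈ p.edges) :
    ∃ (b : V) (hb : b ∈ p.support), b ≠ u ∧ e ∈ (p.takeUntil b hb).edges ∧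
      f ∈ (p.takeUntil b hb).edges ∧ (b = y → y ∈ e ∨ y ∈ f) := by
  induction p with
  | nil => simp at he
  | @cons u c y h t ih =>
    have hp' := (Walk.cons_isPath_iff _ _).1 hp
    rw [Walk.edges_cons, List.mem_cons] at he hf
    rcases he with rfl | he
    · rcases hf with rfl | hf
      · refine ⟨c, by simp, h.ne', ?_, ?_, ?_⟩
        · erw [takeUntil_cons h t _ t.start_mem_support h.ne, takeUntil_start]; simp
        · erw [takeUntil_cons h t _ t.start_mem_support h.ne, takeUntil_start]; simp
        · rintro rfl; simp
      · obtain ⟨b, hb, hbc, hmem, hy⟩ := exists_takeUntil_single t hp'.1 hf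
        have hub : u ≠ b := fun h' => hp'.2 (h' ▸ hb)
        refine ⟨b, by simp [hb], fun h' => hub h'.symm, ?_, ?_, fun h' => Or.inr (hy h')⟩
        · erw [takeUntil_cons h t _ hb hub, Walk.edges_cons]; exact List.mem_cons_self
        · erw [takeUntil_cons h t _ hb hub, Walk.edges_cons]; exact List.mem_cons_of_mem _ hmem
    · rcases hf with rfl | hf
      · obtain ⟨b, hb, hbc, hmem, hy⟩ := exists_takeUntil_single t hp'.1 he
        have hub : u ≠ b := fun h' => hp'.2 (h' ▸ hb)
        refine ⟨b, by simp [hb], fun h' => hub h'.symm, ?_, ?_, fun h' => Or.inl (hy h')⟩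
        · erw [takeUntil_cons h t _ hb hub, Walk.edges_cons]; exact List.mem_cons_of_mem _ hmem
        · erw [takeUntil_cons h t _ hb hub, Walk.edges_cons]; exact List.mem_cons_self
      · obtain ⟨b, hb, hbc, hmeme, hmemf, hy⟩ := ih hp'.1 he hf
        have hub : u ≠ b := fun h' => hp'.2 (h' ▸ hb)
        refine ⟨b, by simp [hb], fun h' => hub h'.symm, ?_, ?_, hy⟩
        · erw [takeUntil_cons h t _ hb hub, Walk.edges_cons]; exact List.mem_cons_of_mem _ hmeme
        · erw [takeUntil_cons h t _ hb hub, Walk.edges_cons]; exact List.mem_cons_of_mem _ hmemf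

lemma not_rainbow_of_dup {α : Type*} {u v : V} (col : Sym2 V → α) (p : G.Walk u v) {e f : Sym2 V}
    (he : e ∈ p.edges) (hf : f ∈ p.edges) (hef : e ≠ f) (hc : col e = col f) :
    ¬ (p.edges.map col).Nodup := fun h => hef (List.inj_on_of_nodup_map h he hf hc)


lemma cycle_two_edges {a b : V} (c : G.Walk a a) (hc : c.IsCycle) (hb : b ∈ c.support) :
    ∃ d₁ d₂ : Sym2 V, d₁ ∈ c.edges ∧ d₂ ∈ c.edges ∧ d₁ ≠ d₂ ∧ b ∈ d₁ ∧ b ∈ d₂ := by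
  have hc' := hc.rotate hb
  have hrot : (c.rotate b hb).edges ~r c.edges := c.rotate_edges b hb
  have hlen : 3 ≤ (c.rotate b hb).length := hc'.three_le_length
  cases hq : c.rotate b hb with
  | nil => rw [hq] at hlen; simp at hlen
  | @cons _ w _ h t =>
    rw [hq] at hc' hrot hlen
    have hnd : (Walk.cons h t).edges.Nodup := hc'.isCircuit.isTrail.edges_nodup
    rw [Walk.edges_cons, List.nodup_cons] at hnd
    obtain ⟨w', hadj', t', ht'⟩ := Walk.exists_eq_cons_of_ne h.ne t.reverse
    have hd2 : s(b, w') ∈ t.edges := by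
      have : s(b, w') ∈ t.reverse.edges := by rw [ht', Walk.edges_cons]; simp
      rwa [Walk.edges_reverse, List.mem_reverse] at this
    refine ⟨s(b, w), s(b, w'), ?_, ?_, ?_, by simp, by simp⟩
    · exact hrot.mem_iff.1 (by rw [Walk.edges_cons]; simp)
    · exact hrot.mem_iff.1 (by rw [Walk.edges_cons]; exact List.mem_cons_of_mem _ hd2)
    · intro hdd
      exact hnd.1 (hdd ▸ hd2)

section Theta

variable {x y : V} {Q : Fin 3 → G.Walk x y}

lemma nbr (hdisj : ∀ i j, i ≠ j → ∀ w, w ∈ (Q i).support → w ∈ (Q j).support → w = x ∨ w = y)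
    (hedges : ∀ e, e ∈ G.edgeSet ↔ ∃ i, e ∈ (Q i).edges)
    {i : Fin 3} {w : V} (hw : w ∈ (Q i).support) (hwx : w ≠ x) (hwy : w ≠ y)
    {e : Sym2 V} (he : e ∈ G.edgeSet) (hwe : w ∈ e) : e ∈ (Q i).edges := by
  obtain ⟨j, hj⟩ := (hedges e).1 he
  by_cases hij : i = j
  · exact hij ▸ hj
  · have hwj : w ∈ (Q j).support := mem_support_of_mem_edge _ hj hwe
    rcases hdisj i j hij w hw hwj with h | h
    · exact (hwx h).elim
    · exact (hwy h).elim

lemma cycle_edge_at_y (hpath : ∀ i, (Q i).IsPath)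
    (hdisj : ∀ i j, i ≠ j → ∀ w, w ∈ (Q i).support → w ∈ (Q j).support → w = x ∨ w = y)
    (hedges : ∀ e, e ∈ G.edgeSet ↔ ∃ i, e ∈ (Q i).edges)
    {a : V} (c : G.Walk a a) (hc : c.IsCycle) : ∃ e ∈ c.edges, y ∈ e := by
  classical
  have hlen : 3 ≤ c.length := hc.three_le_length
  have hne : c.edges ≠ [] := by
    intro h
    have h2 := c.length_edges
    rw [h] at h2
    simp at h2
    omega
  obtain ⟨d, hd⟩ := List.exists_mem_of_ne_nil _ hne
  have hdG : d ∈ G.edgeSet := c.edges_subset_edgeSet hd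
  obtain ⟨i, hdi⟩ := (hedges d).1 hdG
  obtain ⟨dr, hdr, hdre⟩ := List.mem_map.1 hdi
  have hdeq : d = s(dr.fst, dr.snd) := by rw [← hdre]; rfl
  have hbs : dr.snd ∈ (Q i).support := Walk.dart_snd_mem_support_of_mem_darts _ hdr
  have hbx : dr.snd ≠ x := dart_snd_ne_start (Q i) (hpath i) hdr
  have hzdrop : dr.fst ∉ ((Q i).dropUntil dr.snd hbs).support :=
    dart_fst_not_mem_dropUntil _ (hpath i) hdr hbs
  have hxdrop : x ∉ ((Q i).dropUntil dr.snd hbs).support :=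
    start_not_mem_dropUntil _ (hpath i) hbs hbx
  have hdz : s(dr.fst, dr.snd) ∈ (Q i).edges := hdeq ▸ hdi
  have hdc : s(dr.fst, dr.snd) ∈ c.edges := hdeq ▸ hd
  have H : ∀ (n : ℕ) (b' : V) (r : G.Walk b' y), r.length = n → r.IsPath →
      (∀ e ∈ r.edges, e ∈ (Q i).edges) → x ∉ r.support → ∀ z', G.Adj z' b' →
      z' ∉ r.support → s(z', b') ∈ c.edges → s(z', b') ∈ (Q i).edges →
      ∃ e ∈ c.edges, y ∈ e := by
    intro n
    induction n with
    | zero =>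
      intro b' r hlen0 _ _ _ z' _ _ hcE _
      cases r with
      | nil => exact ⟨s(z', y), hcE, by simp⟩
      | cons h t => simp at hlen0
    | succ n ihn =>
      intro b' r hlenr hr hsub hx z' hz'b hz's hcE hQE
      cases r with
      | nil => exact ⟨s(z', y), hcE, by simp⟩
      | @cons _ b₂ _ hadj t =>
        have hr' := (Walk.cons_isPath_iff _ _).1 hr
        have hby : b' ≠ y := fun h => hr'.2 (h ▸ t.end_mem_support)
        have hb's : b' ∈ (Q i).support := mem_support_of_mem_edge _ hQE (by simp)
        have hb'c : b' ∈ c.support := mem_support_of_mem_edge c hcE (by simp)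
        obtain ⟨d₁, d₂, hd₁, hd₂, hdd, hb1, hb2⟩ := cycle_two_edges c hc hb'c
        have hb'x : b' ≠ x := fun h => hx (by rw [← h]; exact Walk.start_mem_support _)
        have hd₁Q : d₁ ∈ (Q i).edges :=
          nbr hdisj hedges hb's hb'x hby (c.edges_subset_edgeSet hd₁) hb1
        have hd₂Q : d₂ ∈ (Q i).edges :=
          nbr hdisj hedges hb's hb'x hby (c.edges_subset_edgeSet hd₂) hb2
        have hnQ : s(b', b₂) ∈ (Q i).edges := hsub _ (by rw [Walk.edges_cons]; simp)
        have hne2 : z' ≠ b₂ := fun h => hz's (by rw [h]; simp)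
        have hEne : s(z', b') ≠ s(b', b₂) := by
          intro h'
          rw [Sym2.eq_iff] at h'
          rcases h' with ⟨h1, h2⟩ | ⟨h1, h2⟩
          · exact hz'b.ne h1
          · exact hne2 h1
        have hclass : ∀ d', d' ∈ (Q i).edges → b' ∈ d' → d' = s(z', b') ∨ d' = s(b', b₂) := by
          intro d' hd' hb'd'
          by_contra hcon
          push_neg at hcon
          exact three_edges_at_vertex (Q i) (hpath i) hd' hQE hnQ hcon.1 hcon.2 hEne hb'd'
            (by simp) (by simp)
        have hnext : s(b', b₂) ∈ c.edges := by
          rcases hclass d₁ hd₁Q hb1 with h1 | h1 <;> rcases hclass d₂ hd₂Q hb2 with h2 | h2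
          · exact absurd (h1.trans h2.symm) hdd
          · exact h2 ▸ hd₂
          · exact h1 ▸ hd₁
          · exact h1 ▸ hd₁
        refine ihn b₂ t (by simpa using hlenr) hr'.1
          (fun e he => hsub _ (by rw [Walk.edges_cons]; exact List.mem_cons_of_mem _ he))
          (fun h => hx (by rw [Walk.support_cons]; exact List.mem_cons_of_mem _ h)) b' hadj hr'.2
          hnext hnQ
  exact H _ dr.snd ((Q i).dropUntil dr.snd hbs) rfl ((hpath i).dropUntil hbs)
    (fun e he => Walk.edges_dropUntil_subset _ hbs he) hxdrop dr.fst dr.adj hzdrop hdc hdz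

lemma unique_avoid (hpath : ∀ i, (Q i).IsPath)
    (hdisj : ∀ i j, i ≠ j → ∀ w, w ∈ (Q i).support → w ∈ (Q j).support → w = x ∨ w = y)
    (hedges : ∀ e, e ∈ G.edgeSet ↔ ∃ i, e ∈ (Q i).edges)
    {u v : V} (p q : G.Walk u v) (hp : p.IsPath) (hq : q.IsPath)
    (hyp : y ∉ p.support) (hyq : y ∉ q.support) : p = q := by
  classical
  set H := G.deleteEdges {e : Sym2 V | y ∈ e} with hH
  have hHle : H ≤ G := G.deleteEdges_le _
  have hHacyc : H.IsAcyclic := by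
    intro a c hcyc
    have hcG : (c.mapLe hHle).IsCycle := (Walk.mapLe_isCycle hHle).2 hcyc
    obtain ⟨e, he, hye⟩ := cycle_edge_at_y hpath hdisj hedges _ hcG
    have hmapeq : Walk.mapLe hHle c =
        c.transfer G (fun e he => edgeSet_mono hHle (c.edges_subset_edgeSet he)) :=
      (Walk.transfer_eq_map_ofLE c _ hHle).symm
    have heH : e ∈ c.edges := by
      rw [hmapeq, Walk.edges_transfer] at he
      exact he
    have heHs := c.edges_subset_edgeSet heH
    rw [hH, edgeSet_deleteEdges] at heHs
    exact heHs.2 hye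
  have hpe : ∀ e ∈ p.edges, e ∈ H.edgeSet := by
    intro e hep
    rw [hH, edgeSet_deleteEdges]
    exact ⟨p.edges_subset_edgeSet hep, fun hye => hyp (mem_support_of_mem_edge p hep hye)⟩
  have hqe : ∀ e ∈ q.edges, e ∈ H.edgeSet := by
    intro e heq
    rw [hH, edgeSet_deleteEdges]
    exact ⟨q.edges_subset_edgeSet heq, fun hye => hyq (mem_support_of_mem_edge q heq hye)⟩
  have key : (⟨p.transfer H hpe, hp.transfer hpe⟩ : H.Path u v) =
      ⟨q.transfer H hqe, hq.transfer hqe⟩ := hHacyc.path_unique _ _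
  have keyw : p.transfer H hpe = q.transfer H hqe := congrArg Subtype.val key
  have e1 : ((p.transfer H hpe).transfer G (fun e he => edgeSet_mono hHle
      ((p.transfer H hpe).edges_subset_edgeSet he))) = p := by
    rw [Walk.transfer_transfer]
    exact p.transfer_self
  have e2 : ((q.transfer H hqe).transfer G (fun e he => edgeSet_mono hHle
      ((q.transfer H hqe).edges_subset_edgeSet he))) = q := by
    rw [Walk.transfer_transfer]
    exact q.transfer_self
  have back : ∀ (w : H.Walk u v), w.transfer G (fun e he => edgeSet_mono hHle
      (w.edges_subset_edgeSet he)) = w.mapLe hHle := fun w =>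
    Walk.transfer_eq_map_ofLE w _ hHle
  rw [← e1, ← e2, back, back, keyw]

end Theta


lemma sym2_eq_of_mem {x y : V} {e : Sym2 V} (hx : x ∈ e) (hy : y ∈ e) (hxy : x ≠ y) :
    e = s(x, y) := by
  induction e with
  | _ a b =>
    rcases Sym2.mem_iff.1 hx with rfl | rfl <;> rcases Sym2.mem_iff.1 hy with rfl | rfl
    · exact (hxy rfl).elim
    · rfl
    · exact Sym2.eq_swap
    · exact (hxy rfl).elim

lemma first_edge_spec {x y : V} (p : G.Walk x y) (hp : p.IsPath) (hxy : x ≠ y) :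
    ∃ (z : V) (hz : z ∈ p.support), G.Adj x z ∧ z ≠ x ∧ s(x, z) ∈ p.edges ∧
      (p.takeUntil z hz).edges = [s(x, z)] ∧ (z = y → p.edges = [s(x, y)]) := by
  obtain ⟨z, hadj, t, rfl⟩ := Walk.exists_eq_cons_of_ne hxy p
  have hp' := (Walk.cons_isPath_iff _ _).1 hp
  have hz : z ∈ (Walk.cons hadj t).support := by simp
  refine ⟨z, hz, hadj, hadj.ne', by simp, ?_, ?_⟩
  · rw [takeUntil_cons hadj t hz t.start_mem_support hadj.ne, takeUntil_start]
    simp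
  · rintro rfl
    rw [loop_path_eq_nil t hp'.1]
    simp

lemma single_edge_branch {x y : V} (p : G.Walk x y) (hp : p.IsPath) (hxy : x ≠ y)
    (he : s(x, y) ∈ p.edges) : p.edges = [s(x, y)] := by
  obtain ⟨z, hz, hadj, hzx, hze, _, hsingle⟩ := first_edge_spec p hp hxy
  have := edge_at_start_unique p hp he hze (by simp) (by simp)
  have hzy : z = y := by
    rw [Sym2.eq_iff] at this
    rcases this with ⟨_, h2⟩ | ⟨h1, h2⟩
    · exact h2.symm
    · exact (hxy h2.symm).elim
  exact hsingle hzy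

lemma edge_at_end_unique {x y : V} (p : G.Walk x y) (hp : p.IsPath) {e e' : Sym2 V}
    (he : e ∈ p.edges) (he' : e' ∈ p.edges) (hy : y ∈ e) (hy' : y ∈ e') : e = e' := by
  apply edge_at_start_unique p.reverse hp.reverse _ _ hy hy' <;>
    rw [Walk.edges_reverse, List.mem_reverse] <;> assumption

lemma internal_exists {x y : V} (p : G.Walk x y) (hp : p.IsPath) (hxy : x ≠ y)
    (hlen : 2 ≤ p.length) : ∃ z, z ∈ p.support ∧ z ≠ x ∧ z ≠ y := by
  obtain ⟨z, hz, _, hzx, _, _, hsingle⟩ := first_edge_spec p hp hxy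
  refine ⟨z, hz, hzx, fun hzy => ?_⟩
  have h1 := hsingle hzy
  have h2 := p.length_edges
  rw [h1] at h2
  simp at h2
  omega

section Theta2

variable {x y : V} {Q : Fin 3 → G.Walk x y}

lemma cross_path_spec (hxy : x ≠ y) (hpath : ∀ i, (Q i).IsPath)
    (hdisj : ∀ i j, i ≠ j → ∀ w, w ∈ (Q i).support → w ∈ (Q j).support → w = x ∨ w = y)
    {i j : Fin 3} (hij : i ≠ j) {b₁ b₂ : V} (hb₁ : b₁ ∈ (Q i).support) (h1y : b₁ ≠ y)
    (hb₂ : b₂ ∈ (Q j).support) (h2y : b₂ ≠ y) :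
    (((Q i).takeUntil b₁ hb₁).reverse.append ((Q j).takeUntil b₂ hb₂)).IsPath ∧
      y ∉ (((Q i).takeUntil b₁ hb₁).reverse.append ((Q j).takeUntil b₂ hb₂)).support := by
  have hT1 : ((Q i).takeUntil b₁ hb₁).IsPath := (hpath i).takeUntil hb₁
  have hT2 : ((Q j).takeUntil b₂ hb₂).IsPath := (hpath j).takeUntil hb₂
  have hyT1 : y ∉ ((Q i).takeUntil b₁ hb₁).support :=
    end_not_mem_takeUntil (Q i) (hpath i) hb₁ h1y
  have hyT2 : y ∉ ((Q j).takeUntil b₂ hb₂).support :=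
    end_not_mem_takeUntil (Q j) (hpath j) hb₂ h2y
  constructor
  · apply isPath_append_of_inter hT1.reverse hT2
    intro z hz1 hz2
    rw [Walk.support_reverse, List.mem_reverse] at hz1
    have hzi : z ∈ (Q i).support := Walk.support_takeUntil_subset _ hb₁ hz1
    have hzj : z ∈ (Q j).support := Walk.support_takeUntil_subset _ hb₂ hz2
    rcases hdisj i j hij z hzi hzj with h | h
    · exact h
    · subst h
      exact (hyT1 hz1).elim
  · rw [Walk.mem_support_append_iff]
    rintro (h | h)
    · rw [Walk.support_reverse, List.mem_reverse] at h
      exact hyT1 h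
    · exact hyT2 h

lemma ml (hxy : x ≠ y) (hpath : ∀ i, (Q i).IsPath)
    (hdisj : ∀ i j, i ≠ j → ∀ w, w ∈ (Q i).support → w ∈ (Q j).support → w = x ∨ w = y)
    (hedges : ∀ e, e ∈ G.edgeSet ↔ ∃ i, e ∈ (Q i).edges)
    (hQ0 : 2 ≤ (Q 0).length) (hQ1 : 2 ≤ (Q 1).length)
    {α : Type*} (col : Sym2 V → α) (hcol : RainbowTwoConnectedColouring G col)
    (i j : Fin 3) (e f : Sym2 V) (he : e ∈ (Q i).edges) (hf : f ∈ (Q j).edges)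
    (hef : e ≠ f) (hcolef : col e = col f) : y ∈ e ∨ y ∈ f := by
  classical
  by_contra hcon
  push_neg at hcon
  obtain ⟨hye, hyf⟩ := hcon
  -- a helper that kills a rainbow path avoiding y between two internal vertices on
  -- prescribed branches, when e, f sit on the respective takeUntil prefixes.
  have key : ∀ (i' j' : Fin 3), i' ≠ j' → ∀ (b₁ b₂ : V) (hb₁ : b₁ ∈ (Q i').support)
      (hb₂ : b₂ ∈ (Q j').support), b₁ ≠ y → b₂ ≠ y →
      e ∈ ((Q i').takeUntil b₁ hb₁).edges ∨ e ∈ ((Q j').takeUntil b₂ hb₂).edges →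
      f ∈ ((Q i').takeUntil b₁ hb₁).edges ∨ f ∈ ((Q j').takeUntil b₂ hb₂).edges →
      ∀ r : G.Walk b₁ b₂, r.IsPath → IsRainbowWalk col r → y ∉ r.support → False := by
    intro i' j' hij b₁ b₂ hb₁ hb₂ h1y h2y hein hfin r hr hrain hyr
    obtain ⟨hWp, hWy⟩ := cross_path_spec hxy hpath hdisj hij hb₁ h1y hb₂ h2y
    have hrW := unique_avoid hpath hdisj hedges r _ hr hWp hyr hWy
    have hmem : ∀ g : Sym2 V, g ∈ ((Q i').takeUntil b₁ hb₁).edges ∨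
        g ∈ ((Q j').takeUntil b₂ hb₂).edges → g ∈ r.edges := by
      intro g hg
      rw [hrW, Walk.edges_append]
      rcases hg with hg | hg
      · exact List.mem_append_left _ (by rw [Walk.edges_reverse, List.mem_reverse]; exact hg)
      · exact List.mem_append_right _ hg
    exact not_rainbow_of_dup col r (hmem e hein) (hmem f hfin) hef hcolef hrain
  by_cases hij : i = j
  · subst hij
    obtain ⟨b, hb, hbx, hbe, hbf, hby⟩ := exists_takeUntil_pair (Q i) (hpath i) he hf
    have hbyne : b ≠ y := by
      intro h
      rcases hby h with h' | h'
      · exact hye h'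
      · exact hyf h'
    have hm : ∃ m : Fin 3, m ≠ i ∧ 2 ≤ (Q m).length := by
      by_cases h0 : i = 0
      · exact ⟨1, by simp [h0], hQ1⟩
      · exact ⟨0, fun hh => h0 hh.symm, hQ0⟩
    obtain ⟨m, hmi, hmlen⟩ := hm
    obtain ⟨z, hzs, hzx, hzy⟩ := internal_exists (Q m) (hpath m) hxy hmlen
    have hbz : b ≠ z := by
      intro h
      rcases hdisj i m (Ne.symm hmi) b hb (h ▸ hzs) with h' | h'
      · exact hbx h'
      · exact hbyne h'
    obtain ⟨p, q, hpp, hpq, hpqne, hrp, hrq, hd2⟩ := hcol b z hbz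
    by_cases hyp : y ∈ p.support
    · by_cases hyq : y ∈ q.support
      · rcases hd2 y hyp hyq with h | h
        · exact hbyne h.symm
        · exact hzy h.symm
      · exact key i m (Ne.symm hmi) b z hb hzs hbyne hzy (Or.inl hbe) (Or.inl hbf) q hpq hrq hyq
    · exact key i m (Ne.symm hmi) b z hb hzs hbyne hzy (Or.inl hbe) (Or.inl hbf) p hpp hrp hyp
  · obtain ⟨b₁, hb₁, hb₁x, hbe, _, hby1⟩ := exists_takeUntil_pair (Q i) (hpath i) he he
    obtain ⟨b₂, hb₂, hb₂x, hbf, _, hby2⟩ := exists_takeUntil_pair (Q j) (hpath j) hf hf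
    have h1y : b₁ ≠ y := fun h => hye ((hby1 h).elim id id)
    have h2y : b₂ ≠ y := fun h => hyf ((hby2 h).elim id id)
    have hbb : b₁ ≠ b₂ := by
      intro h
      rcases hdisj i j hij b₁ hb₁ (h ▸ hb₂) with h' | h'
      · exact hb₁x h'
      · exact h1y h'
    obtain ⟨p, q, hpp, hpq, hpqne, hrp, hrq, hd2⟩ := hcol b₁ b₂ hbb
    by_cases hyp : y ∈ p.support
    · by_cases hyq : y ∈ q.support
      · rcases hd2 y hyp hyq with h | h
        · exact h1y h.symm
        · exact h2y h.symm
      · exact key i j hij b₁ b₂ hb₁ hb₂ h1y h2y (Or.inl hbe) (Or.inr hbf) q hpq hrq hyq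
    · exact key i j hij b₁ b₂ hb₁ hb₂ h1y h2y (Or.inl hbe) (Or.inr hbf) p hpp hrp hyp

lemma edges_disjoint (hxy : x ≠ y) (hpath : ∀ i, (Q i).IsPath)
    (hdisj : ∀ i j, i ≠ j → ∀ w, w ∈ (Q i).support → w ∈ (Q j).support → w = x ∨ w = y)
    (hQ0 : 2 ≤ (Q 0).length) (hQ1 : 2 ≤ (Q 1).length)
    {i j : Fin 3} (hij : i ≠ j) {e : Sym2 V} (hi : e ∈ (Q i).edges) (hj : e ∈ (Q j).edges) :
    False := by
  have hexy : e = s(x, y) := by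
    induction e with
    | _ a b =>
      have hadj : G.Adj a b := Walk.adj_of_mem_edges _ hi
      have hai : a ∈ (Q i).support := mem_support_of_mem_edge _ hi (by simp)
      have haj : a ∈ (Q j).support := mem_support_of_mem_edge _ hj (by simp)
      have hbi : b ∈ (Q i).support := mem_support_of_mem_edge _ hi (by simp)
      have hbj : b ∈ (Q j).support := mem_support_of_mem_edge _ hj (by simp)
      rcases hdisj i j hij a hai haj with ha | ha <;>
        rcases hdisj i j hij b hbi hbj with hb | hb
      · exact absurd (ha.trans hb.symm) hadj.ne
      · rw [ha, hb]
      · rw [ha, hb]; exact Sym2.eq_swap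
      · exact absurd (ha.trans hb.symm) hadj.ne
  have hlen : ∀ k : Fin 3, e ∈ (Q k).edges → (Q k).length = 1 := by
    intro k hk
    have hsing := single_edge_branch (Q k) (hpath k) hxy (hexy ▸ hk)
    have h2 := (Q k).length_edges
    rw [hsing] at h2
    simpa using h2.symm
  have hcase : i = 0 ∨ i = 1 ∨ j = 0 ∨ j = 1 := by
    have h3i : (i : ℕ) = 0 ∨ (i : ℕ) = 1 ∨ (i : ℕ) = 2 := by omega
    have h3j : (j : ℕ) = 0 ∨ (j : ℕ) = 1 ∨ (j : ℕ) = 2 := by omega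
    rcases h3i with h | h | h <;> rcases h3j with h' | h' | h' <;>
      (simp only [Fin.ext_iff, Fin.val_zero, Fin.val_one, Fin.isValue] at hij ⊢; omega)
  rcases hcase with h | h | h | h
  · exact absurd (hlen i hi) (by rw [h]; omega)
  · exact absurd (hlen i hi) (by rw [h]; omega)
  · exact absurd (hlen j hj) (by rw [h]; omega)
  · exact absurd (hlen j hj) (by rw [h]; omega)

lemma card_edges [Fintype V] (hxy : x ≠ y) (hpath : ∀ i, (Q i).IsPath)
    (hdisj : ∀ i j, i ≠ j → ∀ w, w ∈ (Q i).support → w ∈ (Q j).support → w = x ∨ w = y)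
    (hverts : ∀ w : V, ∃ i, w ∈ (Q i).support)
    (hQ0 : 2 ≤ (Q 0).length) (hQ1 : 2 ≤ (Q 1).length) :
    ((Q 0).edges.toFinset ∪ (Q 1).edges.toFinset ∪ (Q 2).edges.toFinset : Finset (Sym2 V)).card
      = Fintype.card V + 1 := by
  classical
  have hedgecard : ∀ i : Fin 3, (Q i).edges.toFinset.card = (Q i).length := by
    intro i
    rw [List.toFinset_card_of_nodup (hpath i).isTrail.edges_nodup, (Q i).length_edges]
  have hlen1 : ∀ i : Fin 3, 1 ≤ (Q i).length := by
    intro i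
    obtain ⟨z, hadj, t, heq⟩ := Walk.exists_eq_cons_of_ne hxy (Q i)
    rw [heq, Walk.length_cons]
    omega
  set S : Fin 3 → Finset V := fun i => (Q i).support.toFinset \ {x, y} with hS
  have hScard : ∀ i, (S i).card = (Q i).length - 1 := by
    intro i
    have hsub : ({x, y} : Finset V) ⊆ (Q i).support.toFinset := by
      intro w hw
      rcases Finset.mem_insert.1 hw with rfl | hw
      · simp
      · rw [Finset.mem_singleton] at hw
        subst hw
        simp
    rw [hS]
    simp only
    rw [Finset.card_sdiff_of_subset hsub]
    have h1 : (Q i).support.toFinset.card = (Q i).length + 1 := by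
      rw [List.toFinset_card_of_nodup (hpath i).support_nodup, Walk.length_support]
    rw [h1, Finset.card_insert_of_notMem (by simp [hxy]), Finset.card_singleton]
    omega
  have hSdisj : ∀ i j, i ≠ j → Disjoint (S i) (S j) := by
    intro i j hij
    rw [Finset.disjoint_left]
    intro w hwi hwj
    rw [hS] at hwi hwj
    simp only [Finset.mem_sdiff, List.mem_toFinset, Finset.mem_insert,
      Finset.mem_singleton] at hwi hwj
    push_neg at hwi
    rcases hdisj i j hij w hwi.1 hwj.1 with h | h
    · exact hwi.2.1 h
    · exact hwi.2.2 h
  have huniv : (S 0 ∪ S 1 ∪ S 2 ∪ {x, y} : Finset V) = Finset.univ := by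
    apply Finset.eq_univ_of_forall
    intro w
    by_cases hwx : w = x
    · subst hwx; simp
    · by_cases hwy : w = y
      · subst hwy; simp
      · obtain ⟨i, hi⟩ := hverts w
        have hwS : w ∈ S i := by
          rw [hS]
          simp [hi, hwx, hwy]
        have hi3 : i = 0 ∨ i = 1 ∨ i = 2 := by
          have : (i : ℕ) = 0 ∨ (i : ℕ) = 1 ∨ (i : ℕ) = 2 := by omega
          rcases this with h | h | h
          · exact Or.inl (Fin.ext h)
          · exact Or.inr (Or.inl (Fin.ext h))
          · exact Or.inr (Or.inr (Fin.ext h))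
        rcases hi3 with rfl | rfl | rfl <;> simp [hwS]
  have hSdisjxy : ∀ i : Fin 3, Disjoint (S i) ({x, y} : Finset V) := by
    intro i
    rw [Finset.disjoint_right]
    intro w hw
    rw [hS]
    simp only [Finset.mem_sdiff]
    rintro ⟨_, h2⟩
    exact h2 hw
  have hcardV : Fintype.card V =
      (Q 0).length - 1 + ((Q 1).length - 1) + ((Q 2).length - 1) + 2 := by
    rw [← Finset.card_univ, ← huniv]
    rw [Finset.card_union_of_disjoint, Finset.card_union_of_disjoint,
      Finset.card_union_of_disjoint (hSdisj 0 1 (by decide))]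
    · rw [hScard 0, hScard 1, hScard 2]
      have : ({x, y} : Finset V).card = 2 := by
        rw [Finset.card_insert_of_notMem (by simp [hxy]), Finset.card_singleton]
      omega
    · rw [Finset.disjoint_union_left]
      exact ⟨hSdisj 0 2 (by decide), hSdisj 1 2 (by decide)⟩
    · rw [Finset.disjoint_union_left, Finset.disjoint_union_left]
      exact ⟨⟨hSdisjxy 0, hSdisjxy 1⟩, hSdisjxy 2⟩
  have hEdisj : ∀ i j : Fin 3, i ≠ j →
      Disjoint ((Q i).edges.toFinset) ((Q j).edges.toFinset) := by
    intro i j hij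
    rw [Finset.disjoint_left]
    intro e hei hej
    rw [List.mem_toFinset] at hei hej
    exact edges_disjoint hxy hpath hdisj hQ0 hQ1 hij hei hej
  rw [Finset.card_union_of_disjoint, Finset.card_union_of_disjoint (hEdisj 0 1 (by decide))]
  · rw [hedgecard 0, hedgecard 1, hedgecard 2, hcardV]
    have h0 := hlen1 0
    have h1 := hlen1 1
    have h2 := hlen1 2
    omega
  · rw [Finset.disjoint_union_left]
    exact ⟨hEdisj 0 2 (by decide), hEdisj 1 2 (by decide)⟩

lemma branch_classification (hxy : x ≠ y) (hpath : ∀ i, (Q i).IsPath)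
    (hedges : ∀ e, e ∈ G.edgeSet ↔ ∃ i, e ∈ (Q i).edges)
    (uniqx : ∀ (u v : V) (p q : G.Walk u v), p.IsPath → q.IsPath → x ∉ p.support →
      x ∉ q.support → p = q)
    (P : G.Walk x y) (hP : P.IsPath) : ∃ t, P.edges = (Q t).edges := by
  classical
  obtain ⟨w, hadj, P₃, rfl⟩ := Walk.exists_eq_cons_of_ne hxy P
  have hP' := (Walk.cons_isPath_iff _ _).1 hP
  obtain ⟨t, ht⟩ := (hedges s(x, w)).1 hadj
  obtain ⟨z, hz, hadj2, hzx, hze, htake, hsing⟩ := first_edge_spec (Q t) (hpath t) hxy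
  have hwz : w = z := by
    have h := edge_at_start_unique (Q t) (hpath t) ht hze (by simp) (by simp)
    rw [Sym2.eq_iff] at h
    rcases h with ⟨_, h2⟩ | ⟨h1, _⟩
    · exact h2
    · exact (hzx h1.symm).elim
  subst hwz
  by_cases hzy : w = y
  · subst hzy
    have h3 := loop_path_eq_nil P₃ hP'.1
    refine ⟨t, ?_⟩
    rw [h3, hsing rfl]
    simp
  · have hdrop : ((Q t).dropUntil w hz).IsPath := (hpath t).dropUntil hz
    have hxdrop : x ∉ ((Q t).dropUntil w hz).support :=
      start_not_mem_dropUntil _ (hpath t) hz hzx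
    have heq := uniqx w y P₃ ((Q t).dropUntil w hz) hP'.1 hdrop hP'.2 hxdrop
    refine ⟨t, ?_⟩
    rw [Walk.edges_cons, heq]
    conv_rhs => rw [← (Q t).take_spec hz]
    rw [Walk.edges_append, htake]
    rfl

lemma fin3_resolve {t i j k : Fin 3} (hij : i ≠ j) (hik : i ≠ k) (hjk : j ≠ k)
    (ht : t ≠ i) : t = j ∨ t = k := by
  have h1 : (t : ℕ) < 3 := t.isLt
  have h2 : (i : ℕ) < 3 := i.isLt
  have h3 : (j : ℕ) < 3 := j.isLt
  have h4 : (k : ℕ) < 3 := k.isLt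
  have e1 : (i : ℕ) ≠ (j : ℕ) := fun h => hij (Fin.ext h)
  have e2 : (i : ℕ) ≠ (k : ℕ) := fun h => hik (Fin.ext h)
  have e3 : (j : ℕ) ≠ (k : ℕ) := fun h => hjk (Fin.ext h)
  have e4 : (t : ℕ) ≠ (i : ℕ) := fun h => ht (Fin.ext h)
  have : (t : ℕ) = (j : ℕ) ∨ (t : ℕ) = (k : ℕ) := by omega
  rcases this with h | h
  · exact Or.inl (Fin.ext h)
  · exact Or.inr (Fin.ext h)

lemma res [Fintype V] {n : ℕ} (hn : 6 ≤ n) (hcard : Fintype.card V = n)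
    (hxy : x ≠ y) (hpath : ∀ i, (Q i).IsPath)
    (hdisj : ∀ i j, i ≠ j → ∀ w, w ∈ (Q i).support → w ∈ (Q j).support → w = x ∨ w = y)
    (hedges : ∀ e, e ∈ G.edgeSet ↔ ∃ i, e ∈ (Q i).edges)
    (hverts : ∀ w : V, ∃ i, w ∈ (Q i).support)
    (hQ0 : 2 ≤ (Q 0).length) (hQ1 : 2 ≤ (Q 1).length)
    (col : Sym2 V → Fin (n - 2)) (hcol : RainbowTwoConnectedColouring G col)
    (mlx : ∀ (i j : Fin 3) (e f : Sym2 V), e ∈ (Q i).edges → f ∈ (Q j).edges → e ≠ f →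
      col e = col f → x ∈ e ∨ x ∈ f)
    (uniqx : ∀ (u v : V) (p q : G.Walk u v), p.IsPath → q.IsPath → x ∉ p.support →
      x ∉ q.support → p = q)
    (a b c : Sym2 V) (haG : a ∈ G.edgeSet) (hbG : b ∈ G.edgeSet) (hcG : c ∈ G.edgeSet)
    (hab : a ≠ b) (hac : a ≠ c) (hbc : b ≠ c)
    (cab : col a = col b) (cbc : col b = col c)
    (haxy : a = s(x, y)) (hyb : y ∈ b) (hxb : x ∉ b) (hxc : x ∈ c) (hyc : y ∉ c) : False := by
  classical
  have mly := ml hxy hpath hdisj hedges hQ0 hQ1 col hcol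
  obtain ⟨ta, hta⟩ := (hedges a).1 haG
  have hQtasing : (Q ta).edges = [s(x, y)] := single_edge_branch _ (hpath ta) hxy (haxy ▸ hta)
  obtain ⟨jb, hjb⟩ := (hedges b).1 hbG
  have hjbta : jb ≠ ta := by
    intro h
    rw [h, hQtasing, List.mem_singleton, ← haxy] at hjb
    exact hab hjb.symm
  obtain ⟨ic, hic⟩ := (hedges c).1 hcG
  have hicta : ic ≠ ta := by
    intro h
    rw [h, hQtasing, List.mem_singleton, ← haxy] at hic
    exact hac hic.symm
  -- the edge finset
  set E : Finset (Sym2 V) :=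
    (Q 0).edges.toFinset ∪ (Q 1).edges.toFinset ∪ (Q 2).edges.toFinset with hE
  have hEmem : ∀ e : Sym2 V, e ∈ E ↔ e ∈ G.edgeSet := by
    intro e
    rw [hedges, hE]
    simp only [Finset.mem_union, List.mem_toFinset]
    constructor
    · rintro ((h | h) | h)
      · exact ⟨0, h⟩
      · exact ⟨1, h⟩
      · exact ⟨2, h⟩
    · rintro ⟨i, hi⟩
      have : i = 0 ∨ i = 1 ∨ i = 2 := by
        have h3 : (i : ℕ) = 0 ∨ (i : ℕ) = 1 ∨ (i : ℕ) = 2 := by omega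
        rcases h3 with h | h | h
        · exact Or.inl (Fin.ext h)
        · exact Or.inr (Or.inl (Fin.ext h))
        · exact Or.inr (Or.inr (Fin.ext h))
      rcases this with rfl | rfl | rfl
      · exact Or.inl (Or.inl hi)
      · exact Or.inl (Or.inr hi)
      · exact Or.inr hi
  have hEcard : E.card = n + 1 := by
    rw [hE, card_edges hxy hpath hdisj hverts hQ0 hQ1, hcard]
  set E' : Finset (Sym2 V) := E \ {a, b, c} with hE'
  have habcE : ({a, b, c} : Finset (Sym2 V)) ⊆ E := by
    intro e he
    simp only [Finset.mem_insert, Finset.mem_singleton] at he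
    rcases he with rfl | rfl | rfl
    · exact (hEmem e).2 haG
    · exact (hEmem e).2 hbG
    · exact (hEmem e).2 hcG
  have hE'card : E'.card = n - 2 := by
    rw [hE', Finset.card_sdiff_of_subset habcE, hEcard]
    have h3 : ({a, b, c} : Finset (Sym2 V)).card = 3 := by
      rw [Finset.card_insert_of_notMem (by simp [hab, hac]),
        Finset.card_insert_of_notMem (by simp [hbc]), Finset.card_singleton]
    rw [h3]
    omega
  have hE'G : ∀ g ∈ E', g ∈ G.edgeSet ∧ g ≠ a ∧ g ≠ b ∧ g ≠ c := by
    intro g hg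
    rw [hE', Finset.mem_sdiff] at hg
    simp only [Finset.mem_insert, Finset.mem_singleton] at hg
    push_neg at hg
    exact ⟨(hEmem g).1 hg.1, hg.2.1, hg.2.2.1, hg.2.2.2⟩
  have hnoc : ∀ g ∈ E', col g ≠ col a := by
    intro g hg hgc
    obtain ⟨hgG, hga, hgb, hgc'⟩ := hE'G g hg
    obtain ⟨kg, hkg⟩ := (hedges g).1 hgG
    have hyg : y ∈ g := by
      rcases mly kg ic g c hkg hic hgc' (hgc.trans (cab.trans cbc)) with h | h
      · exact h
      · exact (hyc h).elim
    have hxg : x ∈ g := by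
      rcases mlx kg jb g b hkg hjb hgb (hgc.trans cab) with h | h
      · exact h
      · exact (hxb h).elim
    exact hga ((sym2_eq_of_mem hxg hyg hxy).trans haxy.symm)
  -- pigeonhole
  have hpig : ∃ g ∈ E', ∃ h ∈ E', g ≠ h ∧ col g = col h := by
    have hmap : ∀ g ∈ E', col g ∈ (Finset.univ : Finset (Fin (n - 2))).erase (col a) := by
      intro g hg
      exact Finset.mem_erase.2 ⟨hnoc g hg, Finset.mem_univ _⟩
    have hlt : ((Finset.univ : Finset (Fin (n - 2))).erase (col a)).card < E'.card := by
      rw [Finset.card_erase_of_mem (Finset.mem_univ _), hE'card, Finset.card_univ,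
        Fintype.card_fin]
      omega
    obtain ⟨g, hg, h, hh, hgh, hch⟩ :=
      Finset.exists_ne_map_eq_of_card_lt_of_maps_to hlt hmap
    exact ⟨g, hg, h, hh, hgh, hch⟩
  obtain ⟨g0, hg0, h0, hh0, hgh0, hcgh0⟩ := hpig
  -- main killer given an x-first-edge g' and a y-last-edge h' of the complementary branches
  have main : ∀ g' h' : Sym2 V, g' ∈ E' → h' ∈ E' → g' ≠ h' → col g' = col h' →
      x ∈ g' → y ∉ g' → y ∈ h' → x ∉ h' → False := by
    intro g' h' hg'E hh'E hne' hcol' hxg' hyg' hyh' hxh'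
    obtain ⟨hg'G, hg'a, hg'b, hg'c⟩ := hE'G g' hg'E
    obtain ⟨hh'G, hh'a, hh'b, hh'c⟩ := hE'G h' hh'E
    obtain ⟨kg, hkg⟩ := (hedges g').1 hg'G
    obtain ⟨mh, hmh⟩ := (hedges h').1 hh'G
    have hkgta : kg ≠ ta := by
      intro h
      rw [h, hQtasing, List.mem_singleton, ← haxy] at hkg
      exact hg'a hkg
    have hkgic : kg ≠ ic := by
      intro h
      rw [h] at hkg
      exact hg'c (edge_at_start_unique (Q ic) (hpath ic) hkg hic hxg' hxc)
    have hmhta : mh ≠ ta := by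
      intro h
      rw [h, hQtasing, List.mem_singleton, ← haxy] at hmh
      exact hh'a hmh
    have hmhjb : mh ≠ jb := by
      intro h
      rw [h] at hmh
      exact hh'b (edge_at_end_unique (Q jb) (hpath jb) hmh hjb hyh' hyb)
    -- set up the special pair (z, y), z the second vertex of Q ic
    obtain ⟨z, hz, hadjz, hzx, hze, htake, hsing⟩ := first_edge_spec (Q ic) (hpath ic) hxy
    have hzy : z ≠ y := by
      intro h
      have h1 := hsing h
      rw [h1, List.mem_singleton, ← haxy] at hic
      exact hac hic.symm
    have hceq : c = s(x, z) := edge_at_start_unique (Q ic) (hpath ic) hic hze hxc (by simp)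
    obtain ⟨p, q, hpp, hpq, hpqne, hrp, hrq, hd2⟩ := hcol z y hzy
    have killer : ∀ r : G.Walk z y, r.IsPath → IsRainbowWalk col r → x ∈ r.support → False := by
      intro r hr hrain hxr
      have hr1 : (r.takeUntil x hxr).IsPath := hr.takeUntil hxr
      have hyr1 : y ∉ (r.takeUntil x hxr).support := end_not_mem_takeUntil r hr hxr hxy
      have hcanP : (((Q ic).takeUntil z hz).reverse).IsPath := ((hpath ic).takeUntil hz).reverse
      have hycan : y ∉ ((Q ic).takeUntil z hz).reverse.support := by
        rw [Walk.support_reverse, List.mem_reverse]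
        exact end_not_mem_takeUntil (Q ic) (hpath ic) hz hzy
      have heq1 := unique_avoid hpath hdisj hedges (r.takeUntil x hxr) _ hr1 hcanP hyr1 hycan
      have hcr1 : c ∈ (r.takeUntil x hxr).edges := by
        rw [heq1, Walk.edges_reverse, List.mem_reverse, htake, hceq]
        simp
      have hcr : c ∈ r.edges := Walk.edges_takeUntil_subset _ _ hcr1
      have hr2 : (r.dropUntil x hxr).IsPath := hr.dropUntil hxr
      obtain ⟨t, ht⟩ := branch_classification hxy hpath hedges uniqx (r.dropUntil x hxr) hr2
      have hnodup : r.edges.Nodup := hr.isTrail.edges_nodup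
      have hsplit : (r.takeUntil x hxr).edges ++ (r.dropUntil x hxr).edges = r.edges := by
        rw [← Walk.edges_append, r.take_spec hxr]
      have hdisjE : ∀ g'' : Sym2 V, g'' ∈ (r.takeUntil x hxr).edges →
          g'' ∈ (r.dropUntil x hxr).edges → False := by
        rw [← hsplit, List.nodup_append] at hnodup
        exact fun g'' h1 h2 => hnodup.2.2 _ h1 _ h2 rfl
      have htic : t ≠ ic := by
        intro h
        exact hdisjE c hcr1 (by rw [ht, h]; exact hic)
      have hdropr : ∀ g'' : Sym2 V, g'' ∈ (Q t).edges → g'' ∈ r.edges := by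
        intro g'' hg''
        exact Walk.edges_dropUntil_subset _ _ (by rw [ht]; exact hg'')
      rcases fin3_resolve (t := t) hicta (Ne.symm hkgic) (Ne.symm hkgta) htic with h | h
      · -- t = ta : the edge a lies on r
        have har : a ∈ r.edges := hdropr a (by rw [h, hQtasing, haxy]; simp)
        exact not_rainbow_of_dup col r har hcr hac (cab.trans cbc) hrain
      · -- t = kg
        subst h
        have hg'r : g' ∈ r.edges := hdropr g' hkg
        by_cases hbic : jb = ic
        · -- mh = kg : h' also on branch t
          have hmhkg : mh = t := by
            rcases fin3_resolve (t := mh) hicta (Ne.symm hkgic) (Ne.symm hkgta)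
              (hbic ▸ hmhjb) with h' | h'
            · exact absurd h' hmhta
            · exact h'
          have hh'r : h' ∈ r.edges := hdropr h' (by rw [← hmhkg]; exact hmh)
          exact not_rainbow_of_dup col r hg'r hh'r hne' hcol' hrain
        · -- jb = kg : the edge b lies on branch t
          have hjbkg : jb = t := by
            rcases fin3_resolve (t := jb) hicta (Ne.symm hkgic) (Ne.symm hkgta) hbic with h' | h'
            · exact absurd h' hjbta
            · exact h'
          have hbr : b ∈ r.edges := hdropr b (by rw [← hjbkg]; exact hjb)
          exact not_rainbow_of_dup col r hbr hcr hbc cbc hrain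
    by_cases hxp : x ∈ p.support
    · exact killer p hpp hrp hxp
    · by_cases hxq : x ∈ q.support
      · exact killer q hpq hrq hxq
      · exact hpqne (uniqx z y p q hpp hpq hxp hxq)
  -- classify the pigeonhole pair
  obtain ⟨hg0G, hg0a, _, _⟩ := hE'G g0 hg0
  obtain ⟨hh0G, hh0a, _, _⟩ := hE'G h0 hh0
  obtain ⟨k0, hk0⟩ := (hedges g0).1 hg0G
  obtain ⟨m0, hm0⟩ := (hedges h0).1 hh0G
  have hY := mly k0 m0 g0 h0 hk0 hm0 hgh0 hcgh0
  have hX := mlx k0 m0 g0 h0 hk0 hm0 hgh0 hcgh0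
  have hnot2g : ¬(x ∈ g0 ∧ y ∈ g0) := by
    rintro ⟨h1, h2⟩
    exact hg0a ((sym2_eq_of_mem h1 h2 hxy).trans haxy.symm)
  have hnot2h : ¬(x ∈ h0 ∧ y ∈ h0) := by
    rintro ⟨h1, h2⟩
    exact hh0a ((sym2_eq_of_mem h1 h2 hxy).trans haxy.symm)
  rcases hY with hy1 | hy1 <;> rcases hX with hx1 | hx1
  · exact hnot2g ⟨hx1, hy1⟩
  · exact main h0 g0 hh0 hg0 (Ne.symm hgh0) hcgh0.symm hx1
      (fun h => hnot2h ⟨hx1, h⟩) hy1 (fun h => hnot2g ⟨h, hy1⟩)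
  · exact main g0 h0 hg0 hh0 hgh0 hcgh0 hx1
      (fun h => hnot2g ⟨hx1, h⟩) hy1 (fun h => hnot2h ⟨h, hy1⟩)
  · exact hnot2h ⟨hx1, hy1⟩

end Theta2

end Aux
end AuxRainbow

/-- Let G be a Θ-graph on n ≥ 6 vertices, consisting of three
internally vertex-disjoint paths Q 0, Q 1, Q 2 from x to y, where Q 0 and Q 1
have at least 3 vertices (length ≥ 2). Under any rainbow 2-connected colouring
of G with at most n − 2 colours, no colour appears on three distinct edges. -/
theorem stmt16 (n : ℕ) (hn : 6 ≤ n) {V : Type*} [Fintype V] (hcard : Fintype.card V = n)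
    (G : SimpleGraph V) (x y : V) (hxy : x ≠ y)
    (Q : Fin 3 → G.Walk x y)
    (hpath : ∀ i, (Q i).IsPath)
    (hdisj : ∀ i j, i ≠ j → ∀ w, w ∈ (Q i).support → w ∈ (Q j).support → w = x ∨ w = y)
    (hedges : ∀ e, e ∈ G.edgeSet ↔ ∃ i, e ∈ (Q i).edges)
    (hverts : ∀ w : V, ∃ i, w ∈ (Q i).support)
    (hQ0 : 2 ≤ (Q 0).length) (hQ1 : 2 ≤ (Q 1).length)
    (col : Sym2 V → Fin (n - 2)) (hcol : RainbowTwoConnectedColouring G col) :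
    ∀ e₁ e₂ e₃ : Sym2 V, e₁ ∈ G.edgeSet → e₂ ∈ G.edgeSet → e₃ ∈ G.edgeSet →
      e₁ ≠ e₂ → e₁ ≠ e₃ → e₂ ≠ e₃ → ¬ (col e₁ = col e₂ ∧ col e₂ = col e₃) := by
    classical
  intro e₁ e₂ e₃ h1G h2G h3G h12 h13 h23 hcc
  obtain ⟨c12, c23⟩ := hcc
  have c13 : col e₁ = col e₃ := c12.trans c23
  have hpath' : ∀ i, ((Q i).reverse).IsPath := fun i => (hpath i).reverse
  have hdisj' : ∀ i j, i ≠ j → ∀ w, w ∈ ((Q i).reverse).support →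
      w ∈ ((Q j).reverse).support → w = y ∨ w = x := by
    intro i j hij w hwi hwj
    rw [Walk.support_reverse, List.mem_reverse] at hwi hwj
    exact (hdisj i j hij w hwi hwj).symm
  have hedges' : ∀ e, e ∈ G.edgeSet ↔ ∃ i, e ∈ ((Q i).reverse).edges := by
    intro e
    rw [hedges e]
    constructor <;> rintro ⟨i, hi⟩ <;> refine ⟨i, ?_⟩
    · rwa [Walk.edges_reverse, List.mem_reverse]
    · rwa [Walk.edges_reverse, List.mem_reverse] at hi
  have hQ0' : 2 ≤ ((Q 0).reverse).length := by rwa [Walk.length_reverse]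
  have hQ1' : 2 ≤ ((Q 1).reverse).length := by rwa [Walk.length_reverse]
  have mly := Aux.ml hxy hpath hdisj hedges hQ0 hQ1 col hcol
  have mlx : ∀ (i j : Fin 3) (e f : Sym2 V), e ∈ (Q i).edges → f ∈ (Q j).edges → e ≠ f →
      col e = col f → x ∈ e ∨ x ∈ f := by
    intro i j e f he hf hef hcf
    exact Aux.ml hxy.symm hpath' hdisj' hedges' hQ0' hQ1' col hcol i j e f
      (by rwa [Walk.edges_reverse, List.mem_reverse])
      (by rwa [Walk.edges_reverse, List.mem_reverse]) hef hcf
  have uniqx : ∀ (u v : V) (p q : G.Walk u v), p.IsPath → q.IsPath → x ∉ p.support →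
      x ∉ q.support → p = q := fun u v p q hp hq hh1 hh2 =>
    Aux.unique_avoid hpath' hdisj' hedges' p q hp hq hh1 hh2
  obtain ⟨i1, hi1⟩ := (hedges e₁).1 h1G
  obtain ⟨i2, hi2⟩ := (hedges e₂).1 h2G
  obtain ⟨i3, hi3⟩ := (hedges e₃).1 h3G
  have hY12 := mly i1 i2 e₁ e₂ hi1 hi2 h12 c12
  have hX12 := mlx i1 i2 e₁ e₂ hi1 hi2 h12 c12
  have hY13 := mly i1 i3 e₁ e₃ hi1 hi3 h13 c13
  have hX13 := mlx i1 i3 e₁ e₃ hi1 hi3 h13 c13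
  have hY23 := mly i2 i3 e₂ e₃ hi2 hi3 h23 c23
  have hX23 := mlx i2 i3 e₂ e₃ hi2 hi3 h23 c23
  have hres := fun (a b c : Sym2 V) haG hbG hcG hab hac hbc cab cbc haxy hyb hxb hxc hyc =>
    Aux.res hn hcard hxy hpath hdisj hedges hverts hQ0 hQ1 col hcol mlx uniqx a b c
      haG hbG hcG hab hac hbc cab cbc haxy hyb hxb hxc hyc
  have hxye : ∀ e : Sym2 V, x ∈ e → y ∈ e → e = s(x, y) := fun e hx hy =>
    Aux.sym2_eq_of_mem hx hy hxy
  by_cases h1 : x ∈ e₁ ∧ y ∈ e₁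
  · have ha := hxye e₁ h1.1 h1.2
    rcases hY23 with hy2 | hy3
    · have hx2 : x ∉ e₂ := fun hx2 => h12 (ha.trans (hxye e₂ hx2 hy2).symm)
      rcases hX23 with hx2' | hx3
      · exact (hx2 hx2').elim
      · have hy3 : y ∉ e₃ := fun hy3 => h13 (ha.trans (hxye e₃ hx3 hy3).symm)
        exact hres e₁ e₂ e₃ h1G h2G h3G h12 h13 h23 c12 c23 ha hy2 hx2 hx3 hy3
    · have hx3 : x ∉ e₃ := fun hx3 => h13 (ha.trans (hxye e₃ hx3 hy3).symm)
      rcases hX23 with hx2 | hx3'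
      · have hy2 : y ∉ e₂ := fun hy2 => h12 (ha.trans (hxye e₂ hx2 hy2).symm)
        exact hres e₁ e₃ e₂ h1G h3G h2G h13 h12 (Ne.symm h23) c13 c23.symm ha hy3 hx3 hx2 hy2
      · exact (hx3 hx3').elim
  · by_cases h2 : x ∈ e₂ ∧ y ∈ e₂
    · have ha := hxye e₂ h2.1 h2.2
      rcases hY13 with hy1 | hy3
      · have hx1 : x ∉ e₁ := fun hx1 => h12 ((hxye e₁ hx1 hy1).trans ha.symm)
        rcases hX13 with hx1' | hx3
        · exact (hx1 hx1').elim
        · have hy3 : y ∉ e₃ := fun hy3 => h23 (ha.trans (hxye e₃ hx3 hy3).symm)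
          exact hres e₂ e₁ e₃ h2G h1G h3G (Ne.symm h12) h23 h13 c12.symm c13 ha hy1 hx1 hx3 hy3
      · have hx3 : x ∉ e₃ := fun hx3 => h23 (ha.trans (hxye e₃ hx3 hy3).symm)
        rcases hX13 with hx1 | hx3'
        · have hy1 : y ∉ e₁ := fun hy1 => h12 ((hxye e₁ hx1 hy1).trans ha.symm)
          exact hres e₂ e₃ e₁ h2G h3G h1G h23 (Ne.symm h12) (Ne.symm h13) c23 c13.symm ha hy3
            hx3 hx1 hy1
        · exact (hx3 hx3').elim
    · by_cases h3 : x ∈ e₃ ∧ y ∈ e₃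
      · have ha := hxye e₃ h3.1 h3.2
        rcases hY12 with hy1 | hy2
        · have hx1 : x ∉ e₁ := fun hx1 => h13 ((hxye e₁ hx1 hy1).trans ha.symm)
          rcases hX12 with hx1' | hx2
          · exact (hx1 hx1').elim
          · have hy2 : y ∉ e₂ := fun hy2 => h23 ((hxye e₂ hx2 hy2).trans ha.symm)
            exact hres e₃ e₁ e₂ h3G h1G h2G (Ne.symm h13) (Ne.symm h23) h12 c13.symm c12 ha hy1
              hx1 hx2 hy2
        · have hx2 : x ∉ e₂ := fun hx2 => h23 ((hxye e₂ hx2 hy2).trans ha.symm)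
          rcases hX12 with hx1 | hx2'
          · have hy1 : y ∉ e₁ := fun hy1 => h13 ((hxye e₁ hx1 hy1).trans ha.symm)
            exact hres e₃ e₂ e₁ h3G h2G h1G (Ne.symm h23) (Ne.symm h13) (Ne.symm h12) c23.symm
              c12.symm ha hy2 hx2 hx1 hy1
          · exact (hx2 hx2').elim
      · rcases hY12 with hy1 | hy2
        · rcases hY23 with hy2 | hy3
          · rcases hX12 with hx | hx
            · exact h1 ⟨hx, hy1⟩
            · exact h2 ⟨hx, hy2⟩
          · rcases hX13 with hx | hx
            · exact h1 ⟨hx, hy1⟩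
            · exact h3 ⟨hx, hy3⟩
        · rcases hY13 with hy1 | hy3
          · rcases hX12 with hx | hx
            · exact h1 ⟨hx, hy1⟩
            · exact h2 ⟨hx, hy2⟩
          · rcases hX23 with hx | hx
            · exact h2 ⟨hx, hy2⟩
            · exact h3 ⟨hx, hy3⟩
end

section
/- Let G be a Θ-graph consisting of three internally vertex-disjoint paths Q₁, Q₂, Q₃ joining vertices x and y, and fix a rainbow 2-connected edge-colouring of G. Suppose ab is an edge of Q_i and cd is an edge of Q_j with i ≠ j, where Q_i and Q_j each have at least 3 vertices, and where along each path directed from x to y the vertex a precedes b and the vertex c precedes d. If ab and cd receive the same colour, then either (a = x and d = y) or (b = y and c = x). -/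
open SimpleGraph

namespace Stmt17Aux

variable {V : Type*} {G : SimpleGraph V}

lemma path_loop_eq_nil {u : V} (p : G.Walk u u) (hp : p.IsPath) : p = Walk.nil := by
  cases p with
  | nil => rfl
  | cons h q =>
    exfalso
    have hnd := hp.support_nodup
    rw [Walk.support_cons] at hnd
    exact (List.nodup_cons.1 hnd).1 q.end_mem_support

lemma walk_forced {y' : V} {sB : List V} {e₀ : Sym2 V}
    (Hstep : ∀ u z, G.Adj u z → u ∈ sB → u ≠ y' → s(u, z) = e₀ ∨ z ∈ sB) :
    ∀ {u v : V} (W : G.Walk u v), u ∈ sB → v ∉ sB → y' ∉ W.support → e₀ ∈ W.edges := by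
  intro u v W
  induction W with
  | nil => intro hu hv _; exact absurd hu hv
  | @cons u z w h W ih =>
    intro hu hv hy
    have huy : u ≠ y' := by rintro rfl; exact hy (Walk.start_mem_support _)
    rcases Hstep _ _ h hu huy with he | hz
    · rw [Walk.edges_cons, ← he]; exact List.mem_cons_self
    · have hy' : y' ∉ W.support := fun hh => hy (by rw [Walk.support_cons]; exact List.mem_cons_of_mem _ hh)
      rw [Walk.edges_cons]
      exact List.mem_cons_of_mem _ (ih hz hv hy')

lemma sep {x' y' : V} {si sj : List V}
    (hd : ∀ w, w ∈ si → w ∈ sj → w = x' ∨ w = y')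
    (hkey : ∀ u z, G.Adj u z → u ∈ si → u ≠ x' → u ≠ y' → z ∈ si) :
    ∀ {u v : V} (W : G.Walk u v), u ∈ si → u ≠ x' → u ≠ y' → v ∈ sj →
      x' ∈ W.support ∨ y' ∈ W.support := by
  intro u v W
  induction W with
  | nil =>
    intro hu hux huy hv
    rcases hd _ hu hv with h | h
    · exact absurd h hux
    · exact absurd h huy
  | @cons u z _ h W ih =>
    intro hu hux huy hv
    by_cases hzx : z = x'
    · left; rw [Walk.support_cons]; exact List.mem_cons_of_mem _ (hzx ▸ W.start_mem_support)
    by_cases hzy : z = y'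
    · right; rw [Walk.support_cons]; exact List.mem_cons_of_mem _ (hzy ▸ W.start_mem_support)
    rcases ih (hkey _ _ h hu hux huy) hzx hzy hv with hh | hh
    · left; rw [Walk.support_cons]; exact List.mem_cons_of_mem _ hh
    · right; rw [Walk.support_cons]; exact List.mem_cons_of_mem _ hh

lemma support_split {x' y' a' b' : V} (hab : G.Adj a' b')
    (w₁ : G.Walk x' a') (w₂ : G.Walk b' y') :
    (w₁.append (Walk.cons hab w₂)).support = w₁.support ++ w₂.support := by
  rw [Walk.support_append, Walk.support_cons, List.tail_cons]

lemma side_disjoint {x' y' a' b' : V} (hab : G.Adj a' b')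
    (w₁ : G.Walk x' a') (w₂ : G.Walk b' y')
    (hP : (w₁.append (Walk.cons hab w₂)).IsPath) :
    List.Disjoint w₁.support w₂.support := by
  have hnd := hP.support_nodup
  rw [support_split] at hnd
  exact List.disjoint_of_nodup_append hnd

lemma side_step {x' y' a' b' : V} (hab : G.Adj a' b')
    (w₁ : G.Walk x' a') (w₂ : G.Walk b' y')
    (hP : (w₁.append (Walk.cons hab w₂)).IsPath)
    (hkey : ∀ u z, G.Adj u z → u ∈ (w₁.append (Walk.cons hab w₂)).support →
      u ≠ x' → u ≠ y' → s(u, z) ∈ (w₁.append (Walk.cons hab w₂)).edges) :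
    ∀ u z, G.Adj u z → u ∈ w₂.support → u ≠ y' →
      s(u, z) = s(a', b') ∨ z ∈ w₂.support := by
  intro u z hadj hu huy
  have hd12 := side_disjoint hab w₁ w₂ hP
  have hux : u ≠ x' := fun h => hd12 (h ▸ w₁.start_mem_support) hu
  have humem : u ∈ (w₁.append (Walk.cons hab w₂)).support := by
    rw [support_split]; exact List.mem_append_right _ hu
  have he := hkey u z hadj humem hux huy
  rw [Walk.edges_append, Walk.edges_cons] at he
  rcases List.mem_append.1 he with he1 | he2
  · exact absurd (w₁.fst_mem_support_of_mem_edges he1) (fun h => hd12 h hu)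
  · rcases List.mem_cons.1 he2 with he | he2
    · exact Or.inl he
    · exact Or.inr (w₂.snd_mem_support_of_mem_edges he2)

lemma side_step' {x' y' a' b' : V} (hab : G.Adj a' b')
    (w₁ : G.Walk x' a') (w₂ : G.Walk b' y')
    (hP : (w₁.append (Walk.cons hab w₂)).IsPath)
    (hkey : ∀ u z, G.Adj u z → u ∈ (w₁.append (Walk.cons hab w₂)).support →
      u ≠ x' → u ≠ y' → s(u, z) ∈ (w₁.append (Walk.cons hab w₂)).edges) :
    ∀ u z, G.Adj u z → u ∈ w₁.support → u ≠ x' →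
      s(u, z) = s(a', b') ∨ z ∈ w₁.support := by
  intro u z hadj hu hux
  have hd12 := side_disjoint hab w₁ w₂ hP
  have huy : u ≠ y' := fun h => hd12 hu (h ▸ w₂.end_mem_support)
  have humem : u ∈ (w₁.append (Walk.cons hab w₂)).support := by
    rw [support_split]; exact List.mem_append_left _ hu
  have he := hkey u z hadj humem hux huy
  rw [Walk.edges_append, Walk.edges_cons] at he
  rcases List.mem_append.1 he with he1 | he2
  · exact Or.inr (w₁.snd_mem_support_of_mem_edges he1)
  · rcases List.mem_cons.1 he2 with he | he2
    · exact Or.inl he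
    · exact absurd (w₂.fst_mem_support_of_mem_edges he2) (fun h => hd12 hu h)

lemma both_edges {x' y' bb dd : V} {e₁ e₂ : Sym2 V} {sB sD : List V}
    (hxB : x' ∉ sB) (hxD : x' ∉ sD)
    (HstepB : ∀ u z, G.Adj u z → u ∈ sB → u ≠ y' → s(u, z) = e₁ ∨ z ∈ sB)
    (HstepD : ∀ u z, G.Adj u z → u ∈ sD → u ≠ y' → s(u, z) = e₂ ∨ z ∈ sD)
    (R : G.Walk bb dd) (hb : bb ∈ sB) (hd : dd ∈ sD)
    (hx : x' ∈ R.support) (hy : y' ∉ R.support) :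
    e₁ ∈ R.edges ∧ e₂ ∈ R.edges := by
  obtain ⟨R₁, R₂, rfl⟩ := Walk.mem_support_iff_exists_append.mp hx
  have hy1 : y' ∉ R₁.support := fun h => hy ((Walk.mem_support_append_iff _ _).2 (Or.inl h))
  have hy2 : y' ∉ R₂.support := fun h => hy ((Walk.mem_support_append_iff _ _).2 (Or.inr h))
  have h1 : e₁ ∈ R₁.edges := walk_forced HstepB R₁ hb hxB hy1
  have h2 : e₂ ∈ R₂.edges := by
    have hy2' : y' ∉ R₂.reverse.support := by rwa [Walk.support_reverse, List.mem_reverse]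
    have := walk_forced HstepD R₂.reverse hd hxD hy2'
    rwa [Walk.edges_reverse, List.mem_reverse] at this
  constructor
  · rw [Walk.edges_append]; exact List.mem_append_left _ h1
  · rw [Walk.edges_append]; exact List.mem_append_right _ h2

lemma len_one {x' y' a' b' : V} (hab : G.Adj a' b')
    (w₁ : G.Walk x' a') (w₂ : G.Walk b' y')
    (hP : (w₁.append (Walk.cons hab w₂)).IsPath) (ha : a' = x') (hb : b' = y') :
    (w₁.append (Walk.cons hab w₂)).length = 1 := by
  subst ha; subst hb
  have h1 : w₁ = Walk.nil := path_loop_eq_nil w₁ hP.of_append_left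
  have h2 : w₂ = Walk.nil := path_loop_eq_nil w₂ (hP.of_append_right.of_cons)
  subst h1; subst h2
  simp

end Stmt17Aux

open Stmt17Aux

/-- Let G be a Θ-graph with three internally vertex-disjoint
paths Q 0, Q 1, Q 2 from x to y, with a rainbow 2-connected colouring. If ab is
an edge of Q i and cd an edge of Q j (i ≠ j, both paths with at least 3
vertices, a before b and c before d along the paths from x to y) and ab, cd
have the same colour, then a = x and d = y, or b = y and c = x. -/
theorem stmt17 {V : Type*} (G : SimpleGraph V) (x y : V) (hxy : x ≠ y)
    (Q : Fin 3 → G.Walk x y)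
    (hpath : ∀ i, (Q i).IsPath)
    (hdisj : ∀ i j, i ≠ j → ∀ w, w ∈ (Q i).support → w ∈ (Q j).support → w = x ∨ w = y)
    (hedges : ∀ e, e ∈ G.edgeSet ↔ ∃ i, e ∈ (Q i).edges)
    (hverts : ∀ w : V, ∃ i, w ∈ (Q i).support)
    {α : Type*} (col : Sym2 V → α) (hcol : RainbowTwoConnectedColouring G col)
    (i j : Fin 3) (hij : i ≠ j) (hQi : 2 ≤ (Q i).length) (hQj : 2 ≤ (Q j).length)
    (a b c d : V) (hab : G.Adj a b) (hcd : G.Adj c d)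
    (w₁ : G.Walk x a) (w₂ : G.Walk b y)
    (hQieq : Q i = w₁.append (SimpleGraph.Walk.cons hab w₂))
    (w₃ : G.Walk x c) (w₄ : G.Walk d y)
    (hQjeq : Q j = w₃.append (SimpleGraph.Walk.cons hcd w₄))
    (hsame : col s(a, b) = col s(c, d)) :
    (a = x ∧ d = y) ∨ (b = y ∧ c = x) := by
  
  have hQip : (w₁.append (Walk.cons hab w₂)).IsPath := hQieq ▸ hpath i
  have hQjp : (w₃.append (Walk.cons hcd w₄)).IsPath := hQjeq ▸ hpath j
  have hdi := side_disjoint hab w₁ w₂ hQip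
  have hdj := side_disjoint hcd w₃ w₄ hQjp
  -- memberships
  have hbQi : b ∈ (Q i).support := by
    rw [hQieq, support_split]; exact List.mem_append_right _ w₂.start_mem_support
  have haQi : a ∈ (Q i).support := by
    rw [hQieq, support_split]; exact List.mem_append_left _ w₁.end_mem_support
  have hdQj : d ∈ (Q j).support := by
    rw [hQjeq, support_split]; exact List.mem_append_right _ w₄.start_mem_support
  have hcQj : c ∈ (Q j).support := by
    rw [hQjeq, support_split]; exact List.mem_append_left _ w₃.end_mem_support
  have hbx : b ≠ x := fun h => hdi (h ▸ w₁.start_mem_support) w₂.start_mem_support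
  have hay : a ≠ y := fun h => hdi w₁.end_mem_support (h ▸ w₂.end_mem_support)
  have hdx : d ≠ x := fun h => hdj (h ▸ w₃.start_mem_support) w₄.start_mem_support
  have hcy : c ≠ y := fun h => hdj w₃.end_mem_support (h ▸ w₄.end_mem_support)
  -- edges at interior vertices stay within their path
  have key : ∀ (k : Fin 3) (u z : V), G.Adj u z → u ∈ (Q k).support → u ≠ x → u ≠ y →
      s(u, z) ∈ (Q k).edges := by
    intro k u z hadj hu hux huy
    obtain ⟨k', hk'⟩ := (hedges s(u, z)).1 (G.mem_edgeSet.mpr hadj)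
    by_cases h : k' = k
    · exact h ▸ hk'
    · rcases hdisj k k' (fun hh => h hh.symm) u hu ((Q k').fst_mem_support_of_mem_edges hk')
        with h' | h'
      · exact absurd h' hux
      · exact absurd h' huy
  have key' : ∀ (k : Fin 3) (u z : V), G.Adj u z → u ∈ (Q k).support → u ≠ x → u ≠ y →
      z ∈ (Q k).support := fun k u z hadj hu hux huy =>
    (Q k).snd_mem_support_of_mem_edges (key k u z hadj hu hux huy)
  have keyi : ∀ u z, G.Adj u z → u ∈ (w₁.append (Walk.cons hab w₂)).support →
      u ≠ x → u ≠ y → s(u, z) ∈ (w₁.append (Walk.cons hab w₂)).edges := by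
    intro u z h1 h2 h3 h4
    have := key i u z h1 (by rw [hQieq]; exact h2) h3 h4
    rwa [hQieq] at this
  have keyj : ∀ u z, G.Adj u z → u ∈ (w₃.append (Walk.cons hcd w₄)).support →
      u ≠ x → u ≠ y → s(u, z) ∈ (w₃.append (Walk.cons hcd w₄)).edges := by
    intro u z h1 h2 h3 h4
    have := key j u z h1 (by rw [hQjeq]; exact h2) h3 h4
    rwa [hQjeq] at this
  have stepiB := side_step hab w₁ w₂ hQip keyi
  have stepiA := side_step' hab w₁ w₂ hQip keyi
  have stepjB := side_step hcd w₃ w₄ hQjp keyj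
  have stepjA := side_step' hcd w₃ w₄ hQjp keyj
  -- the two equal-coloured edges are distinct
  have hne : s(a, b) ≠ s(c, d) := by
    intro h
    rcases Sym2.eq_iff.1 h with ⟨h1, h2⟩ | ⟨h1, h2⟩
    · have hb : b = y := (hdisj i j hij b hbQi (h2 ▸ hdQj)).resolve_left hbx
      have ha : a = x := (hdisj i j hij a haQi (h1 ▸ hcQj)).resolve_right hay
      have := len_one hab w₁ w₂ hQip ha hb
      rw [hQieq] at hQi
      omega
    · have ha : a = x := (hdisj i j hij a haQi (h1 ▸ hdQj)).resolve_right hay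
      exact hdx (h1 ▸ ha)
  -- Step 1 : b = y ∨ d = y
  have H1 : b = y ∨ d = y := by
    by_contra hcon
    push_neg at hcon
    obtain ⟨hby, hdy⟩ := hcon
    have hbd : b ≠ d := by
      intro h
      rcases hdisj i j hij b hbQi (h ▸ hdQj) with h' | h'
      · exact hbx h'
      · exact hby h'
    obtain ⟨P, P', hPp, hP'p, hPne, hPr, hP'r, hint⟩ := hcol b d hbd
    have h1 := sep (hdisj i j hij) (key' i) P hbQi hbx hby hdQj
    have h2 := sep (hdisj i j hij) (key' i) P' hbQi hbx hby hdQj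
    have hxw2 : x ∉ w₂.support := fun h => hdi w₁.start_mem_support h
    have hxw4 : x ∉ w₄.support := fun h => hdj w₃.start_mem_support h
    have main : ∀ (R : G.Walk b d), IsRainbowWalk col R → x ∈ R.support →
        y ∉ R.support → False := by
      intro R hR hxR hyR
      obtain ⟨h1e, h2e⟩ := both_edges (x' := x) (y' := y) hxw2 hxw4 stepiB stepjB R
        w₂.start_mem_support w₄.start_mem_support hxR hyR
      have hR' : (R.edges.map col).Nodup := hR
      exact hne (List.inj_on_of_nodup_map hR' h1e h2e hsame)
    rcases h1 with hx1 | hy1 <;> rcases h2 with hx2 | hy2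
    · rcases hint x hx1 hx2 with h | h
      · exact hbx h.symm
      · exact hdx h.symm
    · exact main P hPr hx1 (fun h => by
        rcases hint y h hy2 with h' | h'
        · exact hby h'.symm
        · exact hdy h'.symm)
    · exact main P' hP'r hx2 (fun h => by
        rcases hint y hy1 h with h' | h'
        · exact hby h'.symm
        · exact hdy h'.symm)
    · rcases hint y hy1 hy2 with h | h
      · exact hby h.symm
      · exact hdy h.symm
  -- Step 2 : a = x ∨ c = x
  have H2 : a = x ∨ c = x := by
    by_contra hcon
    push_neg at hcon
    obtain ⟨hax, hcx⟩ := hcon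
    have hac : a ≠ c := by
      intro h
      rcases hdisj i j hij a haQi (h ▸ hcQj) with h' | h'
      · exact hax h'
      · exact hay h'
    obtain ⟨P, P', hPp, hP'p, hPne, hPr, hP'r, hint⟩ := hcol a c hac
    have h1 := sep (hdisj i j hij) (key' i) P haQi hax hay hcQj
    have h2 := sep (hdisj i j hij) (key' i) P' haQi hax hay hcQj
    have hyw1 : y ∉ w₁.support := fun h => hdi h w₂.end_mem_support
    have hyw3 : y ∉ w₃.support := fun h => hdj h w₄.end_mem_support
    have main : ∀ (R : G.Walk a c), IsRainbowWalk col R → y ∈ R.support →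
        x ∉ R.support → False := by
      intro R hR hyR hxR
      obtain ⟨h1e, h2e⟩ := both_edges (x' := y) (y' := x) hyw1 hyw3 stepiA stepjA R
        w₁.end_mem_support w₃.end_mem_support hyR hxR
      have hR' : (R.edges.map col).Nodup := hR
      exact hne (List.inj_on_of_nodup_map hR' h1e h2e hsame)
    rcases h1 with hx1 | hy1 <;> rcases h2 with hx2 | hy2
    · rcases hint x hx1 hx2 with h | h
      · exact hax h.symm
      · exact hcx h.symm
    · exact main P' hP'r hy2 (fun h => by
        rcases hint x hx1 h with h' | h'
        · exact hax h'.symm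
        · exact hcx h'.symm)
    · exact main P hPr hy1 (fun h => by
        rcases hint x h hx2 with h' | h'
        · exact hax h'.symm
        · exact hcx h'.symm)
    · rcases hint y hy1 hy2 with h | h
      · exact hay h.symm
      · exact hcy h.symm
  -- combine
  rcases H1 with hb | hd <;> rcases H2 with ha | hc
  · have := len_one hab w₁ w₂ hQip ha hb
    rw [hQieq] at hQi
    omega
  · exact Or.inr ⟨hb, hc⟩
  · exact Or.inl ⟨ha, hd⟩
  · have := len_one hcd w₃ w₄ hQjp hc hd
    rw [hQjeq] at hQj
    omega
end
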